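/- Let c : ℤ → ℤ be finitely supported with Σ_{3 ∤ i} c_i = 0. Let m ≥ 1 and n ≥ 0 be integers with 3^n ∣ m. Then S_{2m} = Σ_i c_i · i^{2m} satisfies S_{2m} ≡ 0 (mod 3^{n+1}). -/

import Mathlib

/-- If `c : ℤ → ℤ` is finitely supported with `Σ_{3 ∤ i} c_i = 0`,
`m ≥ 1`, `n ≥ 0` and `3^n ∣ m`, then `S_{2m} = Σ_i c_i i^{2m} ≡ 0 (mod 3^{n+1})`. -/
theorem even_power_sum_mod_three_pow (c : ℤ →₀ ℤ)
    (h3 : ∑ i ∈ c.support.filter (fun i => ¬ (3 : ℤ) ∣ i), c i = 0)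
    (m n : ℕ) (hm : 1 ≤ m) (hdvd : 3 ^ n ∣ m) :
    (∑ i ∈ c.support, c i * i ^ (2 * m)) ≡ 0 [ZMOD (3 ^ (n + 1))] := by
  obtain ⟨k, hk⟩ := hdvd
  have hk1 : 1 ≤ k := by
    rcases Nat.eq_zero_or_pos k with h | h
    · simp [h] at hk; omega
    · exact h
  set N : ℕ := 3 ^ (n + 1) with hN
  have hNpos : 0 < N := pow_pos (by norm_num) _
  haveI : NeZero N := ⟨hNpos.ne'⟩
  have hmod : ((3:ℤ) ^ (n+1)) = (N : ℤ) := by push_cast [hN]; ring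
  rw [hmod, ← ZMod.intCast_eq_intCast_iff]
  push_cast
  have hle : n + 1 ≤ 2 * m := by
    have h1 : n < 3 ^ n := Nat.lt_pow_self (by norm_num)
    have h2 : 3 ^ n ≤ m := by rw [hk]; exact Nat.le_mul_of_pos_right _ hk1
    omega
  have htot : Nat.totient N = 3 ^ n * 2 := by
    rw [hN, Nat.totient_prime_pow Nat.prime_three (by omega)]
    simp
  have hzero : ∀ i : ℤ, (3:ℤ) ∣ i → ((i : ZMod N)) ^ (2*m) = 0 := by
    intro i ⟨j, hj⟩
    have h3z : (3 : ZMod N) ^ (n+1) = 0 := by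
      have := ZMod.natCast_self N
      rw [hN] at this; push_cast at this
      exact this
    have : (3 : ZMod N) ^ (2*m) = 0 := by
      obtain ⟨d, hd⟩ := Nat.exists_eq_add_of_le hle
      rw [hd, pow_add, h3z, zero_mul]
    rw [hj]; push_cast
    rw [mul_pow, this, zero_mul]
  have hone : ∀ i : ℤ, ¬ (3:ℤ) ∣ i → ((i : ZMod N)) ^ (2*m) = 1 := by
    intro i hi
    have hcop : IsCoprime (i : ℤ) ((3:ℤ) ^ (n+1)) := by
      apply IsCoprime.pow_right
      exact (Int.prime_three.coprime_iff_not_dvd.mpr hi).symm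
    obtain ⟨a, b, hab⟩ := hcop
    have hunit : IsUnit ((i : ZMod N)) := by
      have := congrArg (fun z : ℤ => (z : ZMod N)) hab
      push_cast at this
      have h3z : (3 : ZMod N) ^ (n+1) = 0 := by
        have h2 := ZMod.natCast_self N
        rw [hN] at h2; push_cast at h2
        exact h2
      rw [h3z, mul_zero, add_zero] at this
      exact IsUnit.of_mul_eq_one _ (mul_comm (a : ZMod N) _ ▸ this)
    obtain ⟨u, hu⟩ := hunit
    have hpow : u ^ Nat.totient N = 1 := ZMod.pow_totient u
    have : u ^ (2 * m) = 1 := by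
      have : 2 * m = Nat.totient N * k := by rw [htot, hk]; ring
      rw [this, pow_mul, hpow, one_pow]
    rw [← hu, ← Units.val_pow_eq_pow_val, this, Units.val_one]
  rw [← Finset.sum_filter_add_sum_filter_not c.support (fun i => (3:ℤ) ∣ i)]
  have hA : ∑ i ∈ c.support.filter (fun i => (3:ℤ) ∣ i),
      (c i : ZMod N) * (i : ZMod N) ^ (2*m) = 0 := by
    apply Finset.sum_eq_zero
    intro i hi
    rw [hzero i (Finset.mem_filter.mp hi).2, mul_zero]
  have hB : ∑ i ∈ c.support.filter (fun i => ¬ (3:ℤ) ∣ i),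
      (c i : ZMod N) * (i : ZMod N) ^ (2*m) = 0 := by
    have : ∀ i ∈ c.support.filter (fun i => ¬ (3:ℤ) ∣ i),
        (c i : ZMod N) * (i : ZMod N) ^ (2*m) = (c i : ZMod N) := by
      intro i hi
      rw [hone i (Finset.mem_filter.mp hi).2, mul_one]
    rw [Finset.sum_congr rfl this, ← Int.cast_sum, h3, Int.cast_zero]
  rw [hA, hB, add_zero]
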